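/- With T, H, A defined by the splitting recursion and ρ a spectral gap for α, if δ > 0 and ‖B k‖ ≤ δ for every k with 1 ≤ k ≤ r, then ‖H r‖ ≤ δ · P_{r−1}(δ/ρ), and consequently every formal exponent satisfies |λ j| ≤ δ(1 + P_{r−1}(δ/ρ)). -/

import Mathlib

attribute [local instance] Matrix.linftyOpNormedAddCommGroup

section helpers
variable {p : ℕ}

lemma rowsum_le_norm (M : Matrix (Fin p) (Fin p) ℂ) (i : Fin p) :
    ∑ j, ‖M i j‖ ≤ ‖M‖ := by
  have h : (∑ j, ‖M i j‖₊ : NNReal) ≤ ‖M‖₊ := by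
    rw [Matrix.linfty_opNNNorm_def]
    exact Finset.le_sup (f := fun i => ∑ j, ‖M i j‖₊) (Finset.mem_univ i)
  calc ∑ j, ‖M i j‖ = ((∑ j, ‖M i j‖₊ : NNReal) : ℝ) := by push_cast; rfl
    _ ≤ ‖M‖ := h

lemma entry_le_norm (M : Matrix (Fin p) (Fin p) ℂ) (i j : Fin p) :
    ‖M i j‖ ≤ ‖M‖ := by
  refine le_trans ?_ (rowsum_le_norm M i)
  exact Finset.single_le_sum (fun k _ => norm_nonneg _) (Finset.mem_univ j)

lemma norm_le_of_rowsums (M : Matrix (Fin p) (Fin p) ℂ) (c : ℝ) (hc : 0 ≤ c)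
    (h : ∀ i, ∑ j, ‖M i j‖ ≤ c) : ‖M‖ ≤ c := by
  have h' : ‖M‖₊ ≤ (⟨c, hc⟩ : NNReal) := by
    rw [Matrix.linfty_opNNNorm_def]
    refine Finset.sup_le fun i _ => ?_
    apply NNReal.coe_le_coe.mp
    calc ((∑ j, ‖M i j‖₊ : NNReal) : ℝ) = ∑ j, ‖M i j‖ := by push_cast; rfl
      _ ≤ c := h i
  calc ‖M‖ = ((‖M‖₊ : NNReal) : ℝ) := (coe_nnnorm _).symm
    _ ≤ ((⟨c, hc⟩ : NNReal) : ℝ) := NNReal.coe_le_coe.mpr h'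
    _ = c := rfl

end helpers

lemma q_sum_identity (x : ℝ) (q : ℕ → ℝ) (hq0 : q 0 = 0) (hq1 : q 1 = 2*x)
    (hq : ∀ m, 2 ≤ m → q m = 2*m*x + (∑ l ∈ Finset.Icc 2 m, 3*x*q (l-1))
      + ∑ l ∈ Finset.Icc 2 (m-1), x*q (l-1)*q (m-l))
    (m : ℕ) :
    ∑ l ∈ Finset.Ico 1 (m+1), x*(1+q (l-1))*(2+q (m-l)) = q m := by
  rcases Nat.lt_or_ge m 2 with h2 | h2
  · interval_cases m
    · simp [hq0]
    · simp [hq0, hq1]; ring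
  · obtain ⟨n, rfl⟩ : ∃ n, m = n + 2 := ⟨m - 2, by omega⟩
    -- convert LHS to a range sum
    have hL : ∑ l ∈ Finset.Ico 1 (n+2+1), x*(1+q (l-1))*(2+q (n+2-l))
        = ∑ i ∈ Finset.range (n+2), (2*x + x*q (n+1-i) + 2*x*q i + x*q i*q (n+1-i)) := by
      rw [Finset.sum_Ico_eq_sum_range]
      refine Finset.sum_congr (by congr 1) fun i hi => ?_
      have e1 : 1 + i - 1 = i := by omega
      have e2 : n + 2 - (1 + i) = n + 1 - i := by omega
      rw [e1, e2]; ring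
    rw [hL, hq (n+2) (by omega)]
    -- RHS sums to range sums
    have hR1 : ∑ l ∈ Finset.Icc 2 (n+2), 3*x*q (l-1)
        = ∑ i ∈ Finset.range (n+1), 3*x*q (i+1) := by
      rw [show Finset.Icc 2 (n+2) = Finset.Ico 2 (n+3) from rfl, Finset.sum_Ico_eq_sum_range]
      refine Finset.sum_congr (by congr 1) fun i hi => ?_
      have : 2 + i - 1 = i + 1 := by omega
      rw [this]
    have hR2 : ∑ l ∈ Finset.Icc 2 (n+2-1), x*q (l-1)*q (n+2-l)
        = ∑ i ∈ Finset.range n, x*q (i+1)*q (n-i) := by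
      rw [show Finset.Icc 2 (n+2-1) = Finset.Ico 2 (n+2) from rfl, Finset.sum_Ico_eq_sum_range]
      refine Finset.sum_congr (by congr 1) fun i hi => ?_
      have e1 : 2 + i - 1 = i + 1 := by omega
      have e2 : n + 2 - (2 + i) = n - i := by omega
      rw [e1, e2]
    rw [hR1, hR2]
    rw [Finset.sum_add_distrib, Finset.sum_add_distrib, Finset.sum_add_distrib]
    have s1 : ∑ _i ∈ Finset.range (n+2), 2*x = ((n:ℝ)+2) * (2*x) := by
      rw [Finset.sum_const, Finset.card_range, nsmul_eq_mul]
      push_cast; ring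
    have s2 : ∑ i ∈ Finset.range (n+2), x*q (n+1-i) = ∑ i ∈ Finset.range (n+2), x*q i := by
      have := Finset.sum_range_reflect (fun i => x * q i) (n+2)
      simpa using this
    have s3 : ∑ i ∈ Finset.range (n+2), x*q i = ∑ i ∈ Finset.range (n+1), x*q (i+1) := by
      rw [Finset.sum_range_succ']
      simp [hq0]
    have s4 : ∑ i ∈ Finset.range (n+2), 2*x*q i = ∑ i ∈ Finset.range (n+1), 2*x*q (i+1) := by
      rw [Finset.sum_range_succ']
      simp [hq0]
    have s5 : ∑ i ∈ Finset.range (n+2), x*q i*q (n+1-i)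
        = ∑ i ∈ Finset.range n, x*q (i+1)*q (n-i) := by
      rw [Finset.sum_range_succ, Finset.sum_range_succ']
      simp [hq0]
    have s6 : ∑ i ∈ Finset.range (n+1), x*q (i+1) + ∑ i ∈ Finset.range (n+1), 2*x*q (i+1)
        = ∑ i ∈ Finset.range (n+1), 3*x*q (i+1) := by
      rw [← Finset.sum_add_distrib]
      refine Finset.sum_congr rfl fun i _ => by ring
    rw [s1, s2, s3, s4, s5]
    push_cast
    linarith [s6]

/-- if `‖B k‖ ≤ δ` for `1 ≤ k ≤ r`, then `‖H r‖ ≤ δ·P_{r-1}(δ/ρ)` and every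
formal exponent `λ j = (B r - H r) j j` satisfies `|λ j| ≤ δ(1 + P_{r-1}(δ/ρ))`. -/
theorem splitting_recursion_exponent_bound
    (p r : ℕ) (hp : 1 ≤ p) (hr : 1 ≤ r)
    (α : Fin p → ℂ) (hα : Function.Injective α)
    (ρ : ℝ) (hρ : 0 < ρ)
    (hgap : ∀ i j : Fin p, i ≠ j → ρ ≤ ‖α i - α j‖)
    (B T H A : ℕ → Matrix (Fin p) (Fin p) ℂ)
    (hB0 : B 0 = Matrix.diagonal α)
    (hT0 : T 0 = 1) (hH0 : H 0 = 0) (hA0 : A 0 = B 0)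
    (hH : ∀ k, 1 ≤ k → H k =
      (∑ l ∈ Finset.Ico 1 k, (T l * A (k - l) - B (k - l) * T l)) +
        (if r < k then ((k - r : ℕ) : ℂ) • T (k - r) else 0))
    (hA : ∀ k, 1 ≤ k → A k = Matrix.diagonal fun j => (B k - H k) j j)
    (hT : ∀ k, 1 ≤ k → ∀ i j : Fin p,
      T k i j = if i = j then 0 else (B k - H k) i j / (α j - α i))
    (P : ℕ → Polynomial ℝ)
    (hP0 : P 0 = 0)
    (hP1 : P 1 = Polynomial.C 2 * Polynomial.X)
    (hPk : ∀ k, 2 ≤ k → P k =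
      Polynomial.C (2 * (k : ℝ)) * Polynomial.X
        + ∑ l ∈ Finset.Icc 2 k, Polynomial.C 3 * Polynomial.X * P (l - 1)
        + ∑ l ∈ Finset.Icc 2 (k - 1), Polynomial.X * P (l - 1) * P (k - l))
    (δ : ℝ) (hδ : 0 < δ)
    (hBsmall : ∀ k, 1 ≤ k → k ≤ r → ‖B k‖ ≤ δ) :
    ‖H r‖ ≤ δ * (P (r - 1)).eval (δ / ρ) ∧
      ∀ j : Fin p, ‖(B r - H r) j j‖ ≤ δ * (1 + (P (r - 1)).eval (δ / ρ)) := by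
  set x : ℝ := δ / ρ with hxdef
  have hx0 : 0 ≤ x := div_nonneg hδ.le hρ.le
  set q : ℕ → ℝ := fun n => (P n).eval x with hqdef
  have hq0 : q 0 = 0 := by simp [hqdef, hP0]
  have hq1 : q 1 = 2*x := by simp [hqdef, hP1]
  have hqrec : ∀ m, 2 ≤ m → q m = 2*m*x + (∑ l ∈ Finset.Icc 2 m, 3*x*q (l-1))
      + ∑ l ∈ Finset.Icc 2 (m-1), x*q (l-1)*q (m-l) := by
    intro m hm
    simp only [hqdef, hPk m hm, Polynomial.eval_add, Polynomial.eval_mul, Polynomial.eval_C,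
      Polynomial.eval_X, Polynomial.eval_finset_sum]
  have hqnn : ∀ m, 0 ≤ q m := by
    intro m
    induction m using Nat.strong_induction_on with
    | _ m ih =>
      match m, ih with
      | 0, _ => rw [hq0]
      | 1, _ => rw [hq1]; positivity
      | (n+2), ih =>
        rw [hqrec (n+2) (by omega)]
        have t1 : (0:ℝ) ≤ 2*(n+2:ℕ)*x := by positivity
        have t2 : (0:ℝ) ≤ ∑ l ∈ Finset.Icc 2 (n+2), 3*x*q (l-1) := by
          refine Finset.sum_nonneg fun l hl => ?_
          have hl' := Finset.mem_Icc.mp hl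
          have := ih (l-1) (by omega)
          positivity
        have t3 : (0:ℝ) ≤ ∑ l ∈ Finset.Icc 2 (n+2-1), x*q (l-1)*q (n+2-l) := by
          refine Finset.sum_nonneg fun l hl => ?_
          have hl' := Finset.mem_Icc.mp hl
          have h1 := ih (l-1) (by omega)
          have h2 := ih (n+2-l) (by omega)
          positivity
        linarith
  have key : ∀ k, 1 ≤ k → k ≤ r →
      ‖H k‖ ≤ δ * q (k-1) ∧ ‖T k‖ ≤ x * (1 + q (k-1)) ∧ ‖A k‖ ≤ δ * (1 + q (k-1)) := by
    intro k
    induction k using Nat.strong_induction_on with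
    | _ k ih =>
      intro hk1 hkr
      have hHk : ‖H k‖ ≤ δ * q (k-1) := by
        rw [hH k hk1, if_neg (by omega : ¬ r < k), add_zero]
        calc ‖∑ l ∈ Finset.Ico 1 k, (T l * A (k-l) - B (k-l) * T l)‖
            ≤ ∑ l ∈ Finset.Ico 1 k, ‖T l * A (k-l) - B (k-l) * T l‖ := norm_sum_le _ _
          _ ≤ ∑ l ∈ Finset.Ico 1 k, δ * (x*(1 + q (l-1))*(2 + q (k-1-l))) := by
              refine Finset.sum_le_sum fun l hl => ?_
              have hl' := Finset.mem_Ico.mp hl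
              obtain ⟨-, hTl, -⟩ := ih l hl'.2 hl'.1 (by omega)
              obtain ⟨-, -, hAkl⟩ := ih (k-l) (by omega) (by omega) (by omega)
              have hBkl : ‖B (k-l)‖ ≤ δ := hBsmall (k-l) (by omega) (by omega)
              have e : k - l - 1 = k - 1 - l := by omega
              rw [e] at hAkl
              have hTnn : (0:ℝ) ≤ x * (1 + q (l-1)) := by
                have := hqnn (l-1); positivity
              calc ‖T l * A (k-l) - B (k-l) * T l‖
                  ≤ ‖T l * A (k-l)‖ + ‖B (k-l) * T l‖ := norm_sub_le _ _
                _ ≤ ‖T l‖ * ‖A (k-l)‖ + ‖B (k-l)‖ * ‖T l‖ :=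
                    add_le_add (Matrix.linfty_opNorm_mul _ _) (Matrix.linfty_opNorm_mul _ _)
                _ ≤ (x*(1 + q (l-1))) * (δ*(1 + q (k-1-l))) + δ * (x*(1 + q (l-1))) := by
                    refine add_le_add (mul_le_mul hTl hAkl (norm_nonneg _) hTnn)
                      (mul_le_mul hBkl hTl (norm_nonneg _) hδ.le)
                _ = δ * (x*(1 + q (l-1))*(2 + q (k-1-l))) := by ring
          _ = δ * ∑ l ∈ Finset.Ico 1 k, x*(1 + q (l-1))*(2 + q (k-1-l)) := by
              rw [Finset.mul_sum]
          _ = δ * q (k-1) := by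
              rw [show k = (k-1)+1 from by omega]
              simp only [Nat.add_sub_cancel]
              rw [q_sum_identity x q hq0 hq1 hqrec (k-1)]
      have hBk : ‖B k‖ ≤ δ := hBsmall k hk1 hkr
      have hBH : ‖B k - H k‖ ≤ δ * (1 + q (k-1)) := by
        calc ‖B k - H k‖ ≤ ‖B k‖ + ‖H k‖ := norm_sub_le _ _
          _ ≤ δ + δ * q (k-1) := add_le_add hBk hHk
          _ = δ * (1 + q (k-1)) := by ring
      have hTk : ‖T k‖ ≤ x * (1 + q (k-1)) := by
        have h1 : ‖T k‖ ≤ ‖B k - H k‖ / ρ := by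
          refine norm_le_of_rowsums _ _ (div_nonneg (norm_nonneg _) hρ.le) fun i => ?_
          calc ∑ j, ‖T k i j‖ ≤ ∑ j, ‖(B k - H k) i j‖ / ρ := by
                refine Finset.sum_le_sum fun j _ => ?_
                rw [hT k hk1 i j]
                by_cases hij : i = j
                · rw [if_pos hij, norm_zero]
                  positivity
                · rw [if_neg hij, norm_div]
                  have hgap' : ρ ≤ ‖α j - α i‖ := by
                    exact hgap j i fun h => hij h.symm
                  gcongr
            _ = (∑ j, ‖(B k - H k) i j‖) / ρ := by rw [Finset.sum_div]
            _ ≤ ‖B k - H k‖ / ρ := by gcongr; exact rowsum_le_norm _ _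
        calc ‖T k‖ ≤ ‖B k - H k‖ / ρ := h1
          _ ≤ (δ * (1 + q (k-1))) / ρ := by gcongr
          _ = x * (1 + q (k-1)) := by rw [hxdef]; ring
      have hAnn : (0:ℝ) ≤ δ * (1 + q (k-1)) := by have := hqnn (k-1); positivity
      have hAk : ‖A k‖ ≤ δ * (1 + q (k-1)) := by
        rw [hA k hk1]
        refine norm_le_of_rowsums _ _ hAnn fun i => ?_
        have : ∑ j, ‖Matrix.diagonal (fun j => (B k - H k) j j) i j‖ = ‖(B k - H k) i i‖ := by
          rw [Finset.sum_eq_single_of_mem i (Finset.mem_univ i)]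
          · rw [Matrix.diagonal_apply_eq]
          · intro j _ hj
            rw [Matrix.diagonal_apply_ne' _ hj, norm_zero]
        rw [this]
        exact (entry_le_norm _ _ _).trans hBH
      exact ⟨hHk, hTk, hAk⟩
  obtain ⟨h1, -, -⟩ := key r hr le_rfl
  refine ⟨h1, fun j => ?_⟩
  calc ‖(B r - H r) j j‖ = ‖(B r - H r) j j‖ := rfl
    _ ≤ ‖B r - H r‖ := entry_le_norm _ _ _
    _ ≤ ‖B r‖ + ‖H r‖ := norm_sub_le _ _
    _ ≤ δ + δ * q (r-1) := add_le_add (hBsmall r hr le_rfl) h1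
    _ = δ * (1 + q (r-1)) := by ring
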